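/- Let X be a real Banach space and Φ : X → ℝ ∪ {+∞} proper, lsc, convex with x̄ ∈ dom Φ. Suppose δ ≥ 0, μ_i ≥ 0, ε_i ≥ 0, λ < ∞, and x_i* ∈ ∂_{ε_i} Φ(x̄) are such that μ_i(λ − Φ(x̄) + ε_i) → δ and μ_i x_i* converges weakly* to x*. Then for every u with Φ(u) ≤ λ one has ⟨x*, u − x̄⟩ ≤ δ; that is, x* belongs to the δ-normal set of the sublevel set [Φ ≤ λ] at x̄. -/

import Mathlib

open Set Topology Filter

theorem stmt6 {X : Type*} [NormedAddCommGroup X] [NormedSpace ℝ X] [CompleteSpace X]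
    (Φ : X → EReal)
    (hproper : ∃ z, Φ z ≠ ⊤) (hbot : ∀ z, Φ z ≠ ⊥)
    (hconv : ∀ x y : X, ∀ t : ℝ, 0 ≤ t → t ≤ 1 →
      Φ (t • x + (1 - t) • y) ≤ ((t : ℝ) : EReal) * Φ x + (((1 - t : ℝ)) : EReal) * Φ y)
    (hlsc : LowerSemicontinuous Φ)
    (xb : X) (c : ℝ) (hc : Φ xb = (c : EReal))
    (lam δ : ℝ) (hδ : 0 ≤ δ) (hclam : c ≤ lam)
    (p : X →L[ℝ] ℝ) (μs εs : ℕ → ℝ) (ps : ℕ → X →L[ℝ] ℝ)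
    (hμs : ∀ n, 0 ≤ μs n) (hεs : ∀ n, 0 ≤ εs n)
    (hsub : ∀ n, ∀ u : X,
      Φ xb + ((ps n (u - xb) : ℝ) : EReal) ≤ Φ u + ((εs n : ℝ) : EReal))
    (hμε : Tendsto (fun n => μs n * (lam - c + εs n)) atTop (nhds δ))
    (hweak : ∀ u : X, Tendsto (fun n => μs n * ps n u) atTop (nhds (p u))) :
    ∀ u : X, Φ u ≤ ((lam : ℝ) : EReal) → p (u - xb) ≤ δ := by
  intro u hu
  have key : ∀ n, ps n (u - xb) ≤ lam - c + εs n := by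
    intro n
    have h1 : ((c + ps n (u - xb) : ℝ) : EReal) ≤ ((lam + εs n : ℝ) : EReal) := by
      have := (hsub n u).trans (add_le_add_left hu _)
      rw [hc] at this
      push_cast
      exact this
    have h2 : c + ps n (u - xb) ≤ lam + εs n := EReal.coe_le_coe_iff.mp h1
    linarith
  refine le_of_tendsto_of_tendsto' (hweak (u - xb)) hμε (fun n => ?_)
  exact mul_le_mul_of_nonneg_left (key n) (hμs n)
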